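/- (Tail estimate, abstract form) Let λ ≥ 1 and suppose S is a set of integer tuples (a,b,c,d,e) with a,e ≠ 0, |a| ≤ λ^4/t^4, |b| ≤ λ^4/t^2, |c| ≤ λ^4, |d| ≤ t^2 λ^4, |e| ≤ t^4 λ^4 (for some t ≥ 1) and satisfying 12ae - 3bd + c^2 = 0. Then #S = O_ε(λ^{12+ε}) for every ε > 0, with implied constant independent of t. -/

import Mathlib

open Finset in
lemma divisor_bound (δ : ℝ) (hδ : 0 < δ) :
    ∃ C : ℝ, 0 < C ∧ ∀ n : ℕ, n ≠ 0 → (n.divisors.card : ℝ) ≤ C * (n : ℝ) ^ δ := by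
  set K : ℝ := max 1 (1 / (δ * Real.log 2)) with hK
  have hK1 : 1 ≤ K := le_max_left _ _
  have hlog2 : 0 < Real.log 2 := Real.log_pos one_lt_two
  have hKδ : 1 ≤ K * (δ * Real.log 2) := by
    have h1 : 1 / (δ * Real.log 2) ≤ K := le_max_right _ _
    have h2 : 0 < δ * Real.log 2 := by positivity
    calc (1:ℝ) = (1 / (δ * Real.log 2)) * (δ * Real.log 2) := by field_simp
    _ ≤ K * (δ * Real.log 2) := by gcongr
  set P : ℕ := ⌈(2:ℝ) ^ (1/δ)⌉₊ with hP
  refine ⟨K ^ P, by positivity, fun n hn => ?_⟩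
  -- key per-prime bound
  have key : ∀ p ∈ n.primeFactors,
      ((n.factorization p + 1 : ℕ) : ℝ) ≤
        (if (p:ℝ) < (2:ℝ) ^ (1/δ) then K else 1) * ((p:ℝ) ^ (n.factorization p : ℕ)) ^ δ := by
    intro p hp
    have hpp : p.Prime := Nat.prime_of_mem_primeFactors hp
    have hp2 : (2:ℝ) ≤ (p:ℝ) := by exact_mod_cast hpp.two_le
    set a : ℕ := n.factorization p
    have hrw : ((p:ℝ) ^ a) ^ δ = ((p:ℝ) ^ δ) ^ a := by
      rw [← Real.rpow_natCast (p:ℝ) a, ← Real.rpow_mul (by positivity),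
        mul_comm, Real.rpow_mul (by positivity), Real.rpow_natCast]
    rw [hrw]
    split_ifs with hsmall
    · -- small prime: p^δ ≥ 2^δ, and (2^δ)^a ≥ exp(a δ log 2)... 
      have h2δ : ((2:ℝ) ^ δ) ^ a = Real.exp ((a:ℝ) * (δ * Real.log 2)) := by
        rw [← Real.rpow_natCast ((2:ℝ) ^ δ) a, ← Real.rpow_mul (by norm_num),
          Real.rpow_def_of_pos (by norm_num)]
        ring_nf
      have hexp : (a:ℝ) * (δ * Real.log 2) + 1 ≤ ((2:ℝ) ^ δ) ^ a := by
        rw [h2δ]; exact Real.add_one_le_exp _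
      have hmono : ((2:ℝ) ^ δ) ^ a ≤ ((p:ℝ) ^ δ) ^ a :=
        pow_le_pow_left₀ (by positivity) (Real.rpow_le_rpow (by norm_num) hp2 hδ.le) a
      have : ((a:ℕ) + 1 : ℝ) ≤ K * ((a:ℝ) * (δ * Real.log 2) + 1) := by
        have ha0 : (0:ℝ) ≤ (a:ℝ) := Nat.cast_nonneg a
        nlinarith
      push_cast
      push_cast at this
      nlinarith [hexp, hmono, this, hK1]
    · -- large prime: p^δ ≥ 2
      have hpQ : (2:ℝ) ^ (1/δ) ≤ (p:ℝ) := le_of_not_gt hsmall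
      have h2 : (2:ℝ) ≤ (p:ℝ) ^ δ := by
        have := Real.rpow_le_rpow (by positivity) hpQ hδ.le
        rwa [← Real.rpow_mul (by norm_num), one_div, inv_mul_cancel₀ hδ.ne',
          Real.rpow_one] at this
      have h2a : ((a:ℝ) + 1 : ℝ) ≤ (2:ℝ) ^ a := by
        have h : a + 1 ≤ 2 ^ a := Nat.lt_two_pow_self (n := a)
        exact_mod_cast h
      have hmono : ((2:ℝ) ^ a : ℝ) ≤ ((p:ℝ) ^ δ) ^ a :=
        pow_le_pow_left₀ (by norm_num) h2 a
      push_cast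
      linarith
  have hcard : (n.divisors.card : ℝ) = ∏ p ∈ n.primeFactors, ((n.factorization p + 1 : ℕ) : ℝ) := by
    rw [Nat.card_divisors hn]
    push_cast
    rfl
  have h1 : (n.divisors.card : ℝ) ≤
      (∏ p ∈ n.primeFactors, (if (p:ℝ) < (2:ℝ) ^ (1/δ) then K else 1)) *
        ∏ p ∈ n.primeFactors, ((p:ℝ) ^ (n.factorization p : ℕ)) ^ δ := by
    rw [hcard, ← Finset.prod_mul_distrib]
    exact Finset.prod_le_prod (fun p _ => by positivity) key
  have h2 : ∏ p ∈ n.primeFactors, ((p:ℝ) ^ (n.factorization p : ℕ)) ^ δ = (n:ℝ) ^ δ := by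
    rw [Real.finset_prod_rpow _ _ (fun p _ => by positivity)]
    congr 1
    have hprod : ∏ p ∈ n.primeFactors, p ^ n.factorization p = n := by
      rw [← Nat.prod_factorization_eq_prod_primeFactors]
      exact Nat.factorization_prod_pow_eq_self hn
    calc ∏ p ∈ n.primeFactors, ((p:ℝ) ^ (n.factorization p : ℕ))
        = ((∏ p ∈ n.primeFactors, p ^ n.factorization p : ℕ) : ℝ) := by push_cast; rfl
      _ = (n:ℝ) := by rw [hprod]
  have h3 : (∏ p ∈ n.primeFactors, (if (p:ℝ) < (2:ℝ) ^ (1/δ) then K else 1)) ≤ K ^ P := by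
    rw [Finset.prod_ite, Finset.prod_const, Finset.prod_const, one_pow, mul_one]
    apply pow_le_pow_right₀ hK1
    have hsub : (n.primeFactors.filter (fun p : ℕ => (p:ℝ) < (2:ℝ) ^ (1/δ))) ⊆ Finset.range P := by
      intro p hp
      simp only [Finset.mem_filter] at hp
      rw [Finset.mem_range]
      by_contra h
      push_neg at h
      have : ((2:ℝ) ^ (1/δ)) ≤ (P:ℝ) := Nat.le_ceil _
      have : (P:ℝ) ≤ (p:ℝ) := by exact_mod_cast h
      linarith [hp.2, Nat.le_ceil ((2:ℝ) ^ (1/δ))]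
    calc (n.primeFactors.filter (fun p : ℕ => (p:ℝ) < (2:ℝ) ^ (1/δ))).card
        ≤ (Finset.range P).card := Finset.card_le_card hsub
      _ = P := Finset.card_range P
  calc (n.divisors.card : ℝ)
      ≤ (∏ p ∈ n.primeFactors, (if (p:ℝ) < (2:ℝ) ^ (1/δ) then K else 1)) *
        ∏ p ∈ n.primeFactors, ((p:ℝ) ^ (n.factorization p : ℕ)) ^ δ := h1
    _ = (∏ p ∈ n.primeFactors, (if (p:ℝ) < (2:ℝ) ^ (1/δ) then K else 1)) * (n:ℝ) ^ δ := by rw [h2]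
    _ ≤ K ^ P * (n:ℝ) ^ δ := by
        apply mul_le_mul_of_nonneg_right h3 (by positivity)

/-- The set of (nonzero) integer divisors of `m`, as a finset. -/
def intDivisors (m : ℤ) : Finset ℤ :=
  (m.natAbs.divisors.image (fun d : ℕ => (d:ℤ))) ∪ (m.natAbs.divisors.image (fun d : ℕ => -(d:ℤ)))

lemma card_intDivisors (m : ℤ) : (intDivisors m).card ≤ 2 * m.natAbs.divisors.card := by
  refine le_trans (Finset.card_union_le _ _) ?_
  have h1 := Finset.card_image_le (s := m.natAbs.divisors) (f := fun d : ℕ => (d:ℤ))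
  have h2 := Finset.card_image_le (s := m.natAbs.divisors) (f := fun d : ℕ => -(d:ℤ))
  omega

lemma mem_intDivisors {a m : ℤ} (ha : a ≠ 0) (hm : m ≠ 0) (hdvd : a ∣ m) :
    a ∈ intDivisors m := by
  have h1 : a.natAbs ∣ m.natAbs := Int.natAbs_dvd_natAbs.mpr hdvd
  have h2 : a.natAbs ∈ m.natAbs.divisors :=
    Nat.mem_divisors.mpr ⟨h1, Int.natAbs_ne_zero.mpr hm⟩
  rcases Int.natAbs_eq a with h | h
  · exact Finset.mem_union_left _ (Finset.mem_image.mpr ⟨a.natAbs, h2, h.symm⟩)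
  · exact Finset.mem_union_right _ (Finset.mem_image.mpr ⟨a.natAbs, h2, h.symm⟩)

lemma card_Icc_floor_le (x : ℝ) (hx : 1 ≤ x) :
    ((Finset.Icc (-⌊x⌋) ⌊x⌋).card : ℝ) ≤ 3 * x := by
  have h0 : (0:ℤ) ≤ ⌊x⌋ := Int.floor_nonneg.mpr (by linarith)
  have hfl : (⌊x⌋ : ℝ) ≤ x := Int.floor_le x
  rw [Int.card_Icc]
  have he : (⌊x⌋ + 1 - -⌊x⌋) = 2*⌊x⌋ + 1 := by ring
  rw [he]
  have ht := Int.toNat_of_nonneg (show (0:ℤ) ≤ 2*⌊x⌋+1 by omega)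
  have : (((2*⌊x⌋+1).toNat : ℕ) : ℝ) = ((2*⌊x⌋+1 : ℤ) : ℝ) := by exact_mod_cast congrArg (Int.cast : ℤ → ℝ) ht
  rw [this]
  push_cast
  linarith

/-- The "tail" estimate, abstract form. For every `ε > 0` there is a constant `C_ε`
(independent of `t`) such that: for all reals `λ, t ≥ 1`, if `S` is a set of integer
tuples `(a,b,c,d,e)` with `a, e ≠ 0`, satisfying the box conditions
`|a| ≤ λ⁴/t⁴`, `|b| ≤ λ⁴/t²`, `|c| ≤ λ⁴`, `|d| ≤ t²λ⁴`, `|e| ≤ t⁴λ⁴`, and the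
quadric equation `12ae - 3bd + c² = 0`, then `#S ≤ C_ε · λ^(12+ε)`. -/
theorem tail_estimate (ε : ℝ) (hε : 0 < ε) :
    ∃ Cε : ℝ, 0 < Cε ∧ ∀ lam t : ℝ, 1 ≤ lam → 1 ≤ t →
      ∀ S : Set (ℤ × ℤ × ℤ × ℤ × ℤ),
        (∀ v ∈ S,
          v.1 ≠ 0 ∧ v.2.2.2.2 ≠ 0 ∧
          |(v.1 : ℝ)| ≤ lam ^ 4 / t ^ 4 ∧
          |(v.2.1 : ℝ)| ≤ lam ^ 4 / t ^ 2 ∧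
          |(v.2.2.1 : ℝ)| ≤ lam ^ 4 ∧
          |(v.2.2.2.1 : ℝ)| ≤ t ^ 2 * lam ^ 4 ∧
          |(v.2.2.2.2 : ℝ)| ≤ t ^ 4 * lam ^ 4 ∧
          12 * v.1 * v.2.2.2.2 - 3 * v.2.1 * v.2.2.2.1 + v.2.2.1 ^ 2 = 0) →
        (S.ncard : ℝ) ≤ Cε * lam ^ (12 + ε) := by
  obtain ⟨C, hC, hdiv⟩ := divisor_bound (ε/8) (by positivity)
  refine ⟨54 * C * (4:ℝ) ^ (ε/8), by positivity, fun lam t hlam ht S hS => ?_⟩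
  have hlam0 : (0:ℝ) < lam := by linarith
  have ht0 : (0:ℝ) < t := by linarith
  have hRHS : (0:ℝ) < 54 * C * (4:ℝ) ^ (ε/8) * lam ^ (12+ε) := by positivity
  by_cases hcase : t ≤ lam
  swap
  · -- S is empty since |a| ≥ 1 > lam^4/t^4
    have hS0 : S = ∅ := by
      ext v
      simp only [Set.mem_empty_iff_false, iff_false]
      intro hv
      obtain ⟨ha, -, haR, -⟩ := hS v hv
      have h1 : (1:ℝ) ≤ |(v.1 : ℝ)| := by
        have h1' : (1:ℤ) ≤ |v.1| := Int.one_le_abs (by simpa using ha)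
        calc (1:ℝ) = ((1:ℤ):ℝ) := by norm_num
          _ ≤ ((|v.1| : ℤ) : ℝ) := by exact_mod_cast h1'
          _ = |(v.1 : ℝ)| := by push_cast; ring
      have h2 : lam ^ 4 / t ^ 4 < 1 := by
        rw [div_lt_one (by positivity)]
        have hlt : lam < t := lt_of_not_ge hcase
        exact pow_lt_pow_left₀ hlt hlam0.le (by norm_num)
      linarith
    rw [hS0]
    simpa using hRHS.le
  · -- main case : t ≤ lam
    have hx1 : (1:ℝ) ≤ lam ^ 4 / t ^ 2 := by
      rw [le_div_iff₀ (by positivity)]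
      have h1 : t ^ 2 ≤ lam ^ 2 := by nlinarith
      have h2 : lam ^ 2 ≤ lam ^ 4 := pow_le_pow_right₀ hlam (by norm_num)
      linarith
    have hy1 : (1:ℝ) ≤ lam ^ 4 := one_le_pow₀ hlam
    have hz1 : (1:ℝ) ≤ t ^ 2 * lam ^ 4 := by nlinarith
    set Bb : ℤ := ⌊lam ^ 4 / t ^ 2⌋ with hBb
    set Bc : ℤ := ⌊lam ^ 4⌋ with hBc
    set Bd : ℤ := ⌊t ^ 2 * lam ^ 4⌋ with hBd
    set Box : Finset (ℤ×ℤ×ℤ) :=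
      (Finset.Icc (-Bb) Bb) ×ˢ (Finset.Icc (-Bc) Bc) ×ˢ (Finset.Icc (-Bd) Bd) with hBox
    set g : ℤ×ℤ×ℤ → Finset (ℤ×ℤ×ℤ×ℤ) := fun p =>
      (intDivisors (3*p.1*p.2.2 - p.2.1^2)).image (fun a => (p.1, p.2.1, p.2.2, a)) with hg
    set T : Finset (ℤ×ℤ×ℤ×ℤ) := Box.biUnion g with hT
    set F : ℤ×ℤ×ℤ×ℤ×ℤ → ℤ×ℤ×ℤ×ℤ := fun v => (v.2.1, v.2.2.1, v.2.2.2.1, v.1) with hF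
    have hinj : Set.InjOn F S := by
      intro v hv w hw hvw
      obtain ⟨hav, -, -⟩ := hS v hv
      have heqv := (hS v hv).2.2.2.2.2.2.2
      have heqw := (hS w hw).2.2.2.2.2.2.2
      simp only [hF, Prod.mk.injEq] at hvw
      obtain ⟨h1, h2, h3, h4⟩ := hvw
      have he : v.2.2.2.2 = w.2.2.2.2 := by
        rw [h1, h2, h3, h4] at heqv
        have h12 : 12 * w.1 * v.2.2.2.2 = 12 * w.1 * w.2.2.2.2 := by linarith
        have hw1 : (12 : ℤ) * w.1 ≠ 0 := by
          rw [h4] at hav; exact mul_ne_zero (by norm_num) hav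
        exact mul_left_cancel₀ hw1 (by linarith)
      exact Prod.ext h4 (Prod.ext h1 (Prod.ext h2 (Prod.ext h3 he)))
    have himg : F '' S ⊆ ↑T := by
      rintro _ ⟨v, hv, rfl⟩
      obtain ⟨ha, he, haR, hbR, hcR, hdR, heR, heq⟩ := hS v hv
      have memIcc : ∀ (b : ℤ) (x : ℝ), |(b:ℝ)| ≤ x → b ∈ Finset.Icc (-⌊x⌋) ⌊x⌋ := by
        intro b x hb
        rw [Finset.mem_Icc]
        constructor
        · have : -b ≤ ⌊x⌋ := Int.le_floor.mpr (le_trans (by push_cast; exact neg_le_abs _) hb)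
          omega
        · exact Int.le_floor.mpr (le_trans (le_abs_self _) hb)
      refine Finset.mem_coe.mpr (Finset.mem_biUnion.mpr
        ⟨(v.2.1, v.2.2.1, v.2.2.2.1), ?_, ?_⟩)
      · simp only [hBox, Finset.mem_product]
        exact ⟨memIcc _ _ hbR, memIcc _ _ hcR, memIcc _ _ hdR⟩
      · refine Finset.mem_image.mpr ⟨v.1, ?_, rfl⟩
        have hmeq : 3*v.2.1*v.2.2.2.1 - v.2.2.1^2 = v.1 * (12 * v.2.2.2.2) := by linarith
        refine mem_intDivisors ha ?_ ⟨12 * v.2.2.2.2, hmeq⟩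
        rw [hmeq]
        exact mul_ne_zero ha (mul_ne_zero (by norm_num) he)
    have hTfin : (F '' S).Finite := Set.Finite.subset T.finite_toSet himg
    have hSfin : S.Finite := Set.Finite.of_finite_image hTfin hinj
    have hcount : (S.ncard : ℝ) ≤ (T.card : ℝ) := by
      have h := Set.ncard_le_ncard himg T.finite_toSet
      rw [Set.ncard_coe_finset] at h
      rw [← Set.ncard_image_of_injOn hinj]
      exact_mod_cast h
    set A : ℝ := 2 * (C * (4 * lam^8) ^ (ε/8)) with hA
    have hA0 : 0 ≤ A := by positivity
    have hgcard : ∀ p ∈ Box, ((g p).card : ℝ) ≤ A := by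
      intro p hp
      set m : ℤ := 3*p.1*p.2.2 - p.2.1^2 with hm'
      have hcard1 : (g p).card ≤ 2 * m.natAbs.divisors.card :=
        le_trans Finset.card_image_le (card_intDivisors m)
      by_cases hm : m = 0
      · have : m.natAbs.divisors.card = 0 := by rw [hm]; simp
        have : (g p).card = 0 := by omega
        rw [this]
        simpa using hA0
      · have hm1 : m.natAbs ≠ 0 := Int.natAbs_ne_zero.mpr hm
        have hdb := hdiv m.natAbs hm1
        -- bound |m| ≤ 4 lam^8
        simp only [hBox, Finset.mem_product, Finset.mem_Icc] at hp
        obtain ⟨⟨hb1, hb2⟩, ⟨hc1, hc2⟩, hd1, hd2⟩ := hp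
        have habs : ∀ (b : ℤ) (x : ℝ), 0 ≤ x → -⌊x⌋ ≤ b → b ≤ ⌊x⌋ → |(b:ℝ)| ≤ x := by
          intro b x hx h1 h2
          rw [abs_le]
          have hfl : (⌊x⌋ : ℝ) ≤ x := Int.floor_le x
          constructor
          · have : ((-⌊x⌋ : ℤ) : ℝ) ≤ (b:ℝ) := by exact_mod_cast h1
            push_cast at this
            linarith
          · have : ((b : ℤ) : ℝ) ≤ ((⌊x⌋ : ℤ) : ℝ) := by exact_mod_cast h2
            linarith
        have hbb := habs _ _ (by positivity) hb1 hb2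
        have hcc := habs _ _ (by positivity) hc1 hc2
        have hdd := habs _ _ (by positivity) hd1 hd2
        have hmabs : ((m.natAbs : ℕ) : ℝ) ≤ 4 * lam ^ 8 := by
          have : ((m.natAbs : ℕ) : ℝ) = |(m : ℝ)| := by
            rw [Nat.cast_natAbs]; push_cast; ring
          rw [this, hm']
          push_cast
          have h3 : |(3:ℝ) * p.1 * p.2.2 - p.2.1^2| ≤ 3 * |(p.1:ℝ)| * |(p.2.2:ℝ)| + |(p.2.1:ℝ)|^2 := by
            calc |(3:ℝ) * p.1 * p.2.2 - p.2.1^2| ≤ |(3:ℝ) * p.1 * p.2.2| + |((p.2.1:ℝ))^2| :=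
                abs_sub _ _
              _ = 3 * |(p.1:ℝ)| * |(p.2.2:ℝ)| + |(p.2.1:ℝ)|^2 := by
                  rw [abs_mul, abs_mul, abs_pow]
                  norm_num
          have hprod : 3 * |(p.1:ℝ)| * |(p.2.2:ℝ)| ≤ 3 * lam ^ 8 := by
            have := mul_le_mul hbb hdd (abs_nonneg _) (by positivity)
            calc 3 * |(p.1:ℝ)| * |(p.2.2:ℝ)| = 3 * (|(p.1:ℝ)| * |(p.2.2:ℝ)|) := by ring
              _ ≤ 3 * ((lam ^ 4 / t ^ 2) * (t ^ 2 * lam ^ 4)) := by linarith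
              _ = 3 * lam ^ 8 := by field_simp
          have hsq : |(p.2.1:ℝ)|^2 ≤ lam ^ 8 := by
            calc |(p.2.1:ℝ)|^2 ≤ (lam ^ 4)^2 := by
                  apply pow_le_pow_left₀ (abs_nonneg _) hcc
              _ = lam ^ 8 := by ring
          linarith
        have hdvc : (m.natAbs.divisors.card : ℝ) ≤ C * (4 * lam ^ 8) ^ (ε/8) := by
          refine le_trans hdb ?_
          have := Real.rpow_le_rpow (by positivity) hmabs (by positivity : (0:ℝ) ≤ ε/8)
          nlinarith
        calc ((g p).card : ℝ) ≤ 2 * (m.natAbs.divisors.card : ℝ) := by exact_mod_cast hcard1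
          _ ≤ A := by rw [hA]; linarith
    have hTcard : (T.card : ℝ) ≤ (Box.card : ℝ) * A := by
      have hb := Finset.card_biUnion_le (s := Box) (t := g)
      calc (T.card : ℝ) ≤ ((∑ p ∈ Box, (g p).card : ℕ) : ℝ) := by exact_mod_cast hb
        _ = ∑ p ∈ Box, ((g p).card : ℝ) := by push_cast; rfl
        _ ≤ ∑ _p ∈ Box, A := Finset.sum_le_sum hgcard
        _ = Box.card * A := by rw [Finset.sum_const, nsmul_eq_mul]
    have hBoxcard : (Box.card : ℝ) ≤ 27 * lam ^ 12 := by
      have hc1 := card_Icc_floor_le (lam ^ 4 / t ^ 2) hx1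
      have hc2 := card_Icc_floor_le (lam ^ 4) hy1
      have hc3 := card_Icc_floor_le (t ^ 2 * lam ^ 4) hz1
      have hcardeq : Box.card = (Finset.Icc (-Bb) Bb).card *
          ((Finset.Icc (-Bc) Bc).card * (Finset.Icc (-Bd) Bd).card) := by
        rw [hBox, Finset.card_product, Finset.card_product]
      rw [hcardeq]
      push_cast
      have hm1 : ((Finset.Icc (-Bc) Bc).card : ℝ) * ((Finset.Icc (-Bd) Bd).card : ℝ) ≤
          (3 * lam ^ 4) * (3 * (t ^ 2 * lam ^ 4)) :=
        mul_le_mul hc2 hc3 (Nat.cast_nonneg _) (by positivity)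
      have hm2 : ((Finset.Icc (-Bb) Bb).card : ℝ) *
          (((Finset.Icc (-Bc) Bc).card : ℝ) * ((Finset.Icc (-Bd) Bd).card : ℝ)) ≤
          (3 * (lam ^ 4 / t ^ 2)) * ((3 * lam ^ 4) * (3 * (t ^ 2 * lam ^ 4))) :=
        mul_le_mul hc1 hm1 (mul_nonneg (Nat.cast_nonneg _) (Nat.cast_nonneg _)) (by positivity)
      have heq : (3 * (lam ^ 4 / t ^ 2)) * ((3 * lam ^ 4) * (3 * (t ^ 2 * lam ^ 4))) =
          27 * lam ^ 12 := by field_simp; ring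
      linarith
    have hfinal : (Box.card : ℝ) * A ≤ 54 * C * (4:ℝ) ^ (ε/8) * lam ^ (12 + ε) := by
      have h8 : ((lam ^ (8:ℕ) : ℝ)) ^ (ε/8) = lam ^ ε := by
        rw [← Real.rpow_natCast lam 8, ← Real.rpow_mul hlam0.le]
        norm_num
        congr 1
        ring
      have h4l : ((4:ℝ) * lam ^ 8) ^ (ε/8) = (4:ℝ) ^ (ε/8) * lam ^ ε := by
        rw [Real.mul_rpow (by norm_num) (by positivity), h8]
      have h12 : lam ^ (12:ℕ) * lam ^ ε = lam ^ ((12:ℝ) + ε) := by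
        rw [← Real.rpow_natCast lam 12, ← Real.rpow_add hlam0]
        norm_num
      calc (Box.card : ℝ) * A ≤ (27 * lam ^ 12) * A :=
          mul_le_mul_of_nonneg_right hBoxcard hA0
        _ = 54 * C * (4:ℝ) ^ (ε/8) * (lam ^ (12:ℕ) * lam ^ ε) := by
            rw [hA, h4l]; ring
        _ = 54 * C * (4:ℝ) ^ (ε/8) * lam ^ ((12:ℝ) + ε) := by rw [h12]
    calc (S.ncard : ℝ) ≤ (T.card : ℝ) := hcount
      _ ≤ (Box.card : ℝ) * A := hTcard
      _ ≤ 54 * C * (4:ℝ) ^ (ε/8) * lam ^ (12 + ε) := hfinal
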